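/- Let ||·||_A be a norm on R^p, T_A(x*) its tangent cone at x*, Φ : R^p → R^n a linear map, and suppose ||Φz|| ≥ ε||z|| for all z ∈ T_A(x*), where ε > 0. Given y = Φx* + ω with ||ω|| ≤ δ, any minimizer x̂ of ||x||_A subject to ||y − Φx|| ≤ δ satisfies ||x̂ − x*|| ≤ 2δ/ε. -/
import Mathlib


/-- Robust recovery.  If `f` is a norm on `ℝ^p` with tangent cone
`T = cone{z - x* : f z ≤ f x*}` at `x*`, the linear map `Φ` satisfies the minimum
gain condition `‖Φ z‖ ≥ ε ‖z‖` on `T` with `ε > 0`, and `y = Φ x* + ω` with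
`‖ω‖ ≤ δ`, then any minimizer `x̂` of `f` over `{x : ‖y - Φ x‖ ≤ δ}` satisfies
`‖x̂ - x*‖ ≤ 2δ/ε`. -/
theorem robust_recovery_error_bound {p n : ℕ}
    (f : EuclideanSpace ℝ (Fin p) → ℝ)
    (htri : ∀ x y, f (x + y) ≤ f x + f y)
    (hhom : ∀ (c : ℝ) (x : EuclideanSpace ℝ (Fin p)), f (c • x) = |c| * f x)
    (hdef : ∀ x, f x = 0 → x = 0)
    (Φ : EuclideanSpace ℝ (Fin p) →ₗ[ℝ] EuclideanSpace ℝ (Fin n))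
    (xstar xhat ω y : _) (ε δ : ℝ) (hε : 0 < ε) (hδ : 0 ≤ δ)
    (T : Set (EuclideanSpace ℝ (Fin p)))
    (hT : T = {d | ∃ t : ℝ, 0 ≤ t ∧ ∃ z, f z ≤ f xstar ∧ d = t • (z - xstar)})
    (hgain : ∀ z ∈ T, ε * ‖z‖ ≤ ‖Φ z‖)
    (hy : y = Φ xstar + ω) (hω : ‖ω‖ ≤ δ)
    (hfeas : ‖y - Φ xhat‖ ≤ δ)
    (hopt : ∀ x, ‖y - Φ x‖ ≤ δ → f xhat ≤ f x) :
    ‖xhat - xstar‖ ≤ 2 * δ / ε := by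
  have hfx : ‖y - Φ xstar‖ ≤ δ := by
    rw [hy]; simpa using hω
  have hle : f xhat ≤ f xstar := hopt xstar hfx
  have hmem : xhat - xstar ∈ T := by
    rw [hT]; exact ⟨1, zero_le_one, xhat, hle, (one_smul ℝ _).symm⟩
  have h1 : ε * ‖xhat - xstar‖ ≤ ‖Φ (xhat - xstar)‖ := hgain _ hmem
  have h2 : ‖Φ (xhat - xstar)‖ ≤ 2 * δ := by
    have : Φ (xhat - xstar) = (y - Φ xstar) - (y - Φ xhat) := by
      rw [map_sub]; abel
    rw [this]
    calc ‖(y - Φ xstar) - (y - Φ xhat)‖ ≤ ‖y - Φ xstar‖ + ‖y - Φ xhat‖ := norm_sub_le _ _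
      _ ≤ 2 * δ := by linarith
  rw [le_div_iff₀ hε, mul_comm]
  linarith
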